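/- Let k ∈ ℕ, let u : ℝ → ℝ be ContDiff ℝ k, let a ≤ b be real numbers, let c₀, …, c_k ∈ ℝ, and suppose M ≥ 0 satisfies |(iteratedDeriv i u) x| ≤ M for all 0 ≤ i ≤ k and all x ∈ [a, b]. Then |∫_a^b (∑_{i=0}^{k} cᵢ · (iteratedDeriv i u) x) dx| ≤ (|c₀| · (b − a) + 2 · ∑_{i=1}^{k} |cᵢ|) · M. -/

import Mathlib

open intervalIntegral

/-- Quantitative boundedness of the one-dimensional FVM operator
`L_{[a,b]}[u] = ∫_a^b ∑_{i=0}^k cᵢ u⁽ⁱ⁾(x) dx`. -/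
theorem fvm_one_dim_bounded (k : ℕ) (u : ℝ → ℝ) (hu : ContDiff ℝ k u)
    (a b : ℝ) (hab : a ≤ b) (c : Fin (k + 1) → ℝ) (M : ℝ) (hM : 0 ≤ M)
    (hbound : ∀ i : Fin (k + 1), ∀ x ∈ Set.Icc a b, |iteratedDeriv i u x| ≤ M) :
    |∫ x in a..b, (∑ i : Fin (k + 1), c i * iteratedDeriv i u x)| ≤
      (|c 0| * (b - a) + 2 * ∑ i : Fin k, |c i.succ|) * M := by
  have hcont : ∀ i : Fin (k + 1), Continuous (iteratedDeriv (i : ℕ) u) := by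
    intro i
    exact hu.continuous_iteratedDeriv _ (by exact_mod_cast Nat.le_of_lt_succ i.isLt)
  have hint : ∀ i : Fin (k + 1),
      IntervalIntegrable (fun x => c i * iteratedDeriv (i : ℕ) u x) MeasureTheory.volume a b :=
    fun i => (continuous_const.mul (hcont i)).intervalIntegrable a b
  rw [intervalIntegral.integral_finset_sum (fun i _ => hint i), Fin.sum_univ_succ]
  have h0 : |∫ x in a..b, c 0 * iteratedDeriv ((0 : Fin (k+1)) : ℕ) u x| ≤ |c 0| * M * (b - a) := by
    have := intervalIntegral.norm_integral_le_of_norm_le_const (C := |c 0| * M)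
      (f := fun x => c 0 * iteratedDeriv ((0 : Fin (k+1)) : ℕ) u x) (a := a) (b := b) ?_
    · rw [abs_of_nonneg (sub_nonneg.2 hab)] at this
      simpa [mul_comm, abs_mul] using this
    · intro x hx
      rw [Set.uIoc_of_le hab] at hx
      have := hbound 0 x ⟨le_of_lt hx.1, hx.2⟩
      calc ‖c 0 * iteratedDeriv ((0 : Fin (k+1)) : ℕ) u x‖
          = |c 0| * |iteratedDeriv ((0 : Fin (k+1)) : ℕ) u x| := abs_mul _ _
        _ ≤ |c 0| * M := by exact mul_le_mul_of_nonneg_left this (abs_nonneg _)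
  have hsucc : ∀ i : Fin k,
      |∫ x in a..b, c i.succ * iteratedDeriv ((i.succ : Fin (k+1)) : ℕ) u x| ≤ 2 * |c i.succ| * M := by
    intro i
    have hval : ((i.succ : Fin (k+1)) : ℕ) = (i : ℕ) + 1 := rfl
    have hderiv : ∀ x ∈ Set.uIcc a b,
        HasDerivAt (iteratedDeriv (i : ℕ) u) (iteratedDeriv ((i : ℕ) + 1) u x) x := by
      intro x _
      have hd : Differentiable ℝ (iteratedDeriv (i : ℕ) u) :=
        hu.differentiable_iteratedDeriv _ (by exact_mod_cast i.isLt)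
      simpa [iteratedDeriv_succ] using (hd x).hasDerivAt
    have hftc : (∫ x in a..b, iteratedDeriv ((i : ℕ) + 1) u x)
        = iteratedDeriv (i : ℕ) u b - iteratedDeriv (i : ℕ) u a := by
      exact intervalIntegral.integral_eq_sub_of_hasDerivAt hderiv
        ((hcont i.succ).intervalIntegrable a b)
    rw [hval, intervalIntegral.integral_const_mul, hftc]
    have hb := hbound i.castSucc b ⟨hab, le_refl b⟩
    have ha := hbound i.castSucc a ⟨le_refl a, hab⟩
    rw [Fin.coe_castSucc] at hb ha
    calc |c i.succ * (iteratedDeriv (i : ℕ) u b - iteratedDeriv (i : ℕ) u a)|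
        = |c i.succ| * |iteratedDeriv (i : ℕ) u b - iteratedDeriv (i : ℕ) u a| := abs_mul _ _
      _ ≤ |c i.succ| * (M + M) :=
          mul_le_mul_of_nonneg_left ((abs_sub _ _).trans (add_le_add hb ha)) (abs_nonneg _)
      _ = 2 * |c i.succ| * M := by ring
  have hsum : ∑ i : Fin k, 2 * |c i.succ| * M = 2 * (∑ i : Fin k, |c i.succ|) * M := by
    rw [Finset.mul_sum, Finset.sum_mul]
  calc |(∫ x in a..b, c 0 * iteratedDeriv ((0 : Fin (k+1)) : ℕ) u x) +
        ∑ i : Fin k, ∫ x in a..b, c i.succ * iteratedDeriv ((i.succ : Fin (k+1)) : ℕ) u x|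
      ≤ |∫ x in a..b, c 0 * iteratedDeriv ((0 : Fin (k+1)) : ℕ) u x| +
        |∑ i : Fin k, ∫ x in a..b, c i.succ * iteratedDeriv ((i.succ : Fin (k+1)) : ℕ) u x| :=
        abs_add_le _ _
    _ ≤ |∫ x in a..b, c 0 * iteratedDeriv ((0 : Fin (k+1)) : ℕ) u x| +
        ∑ i : Fin k, |∫ x in a..b, c i.succ * iteratedDeriv ((i.succ : Fin (k+1)) : ℕ) u x| :=
        add_le_add_right (Finset.abs_sum_le_sum_abs _ _) _
    _ ≤ |c 0| * M * (b - a) + ∑ i : Fin k, 2 * |c i.succ| * M :=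
        add_le_add h0 (Finset.sum_le_sum fun i _ => hsucc i)
    _ = (|c 0| * (b - a) + 2 * ∑ i : Fin k, |c i.succ|) * M := by rw [hsum]; ring
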